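/- For any integral non-degenerate variety X ⊂ P^r and any q ∈ P^r, every subset S ⊂ X irredundantly spanning q has cardinality at most r + 1; i.e., S(X,q,t) = ∅ for all t ≥ r + 2. Moreover S(X,q,r+1) ≠ ∅, and it contains a general subset of X of cardinality r + 1. -/

import Mathlib

open scoped LinearAlgebra.Projectivization
open Projectivization

noncomputable section

variable {k : Type} [Field k]

/-- Projective space of the vector space of functions `ι → k`. -/
abbrev PJ (k : Type) [Field k] (ι : Type) := ℙ k (ι → k)

/-- Projective `r`-space `ℙ^r` over `k`. -/
abbrev PP (k : Type) [Field k] (r : ℕ) := PJ k (Fin (r + 1))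

/-- The (projective) linear span of a set of points of projective space. -/
def pspan {ι : Type} (S : Set (PJ k ι)) : Set (PJ k ι) :=
  {p | p.rep ∈ Submodule.span k (Projectivization.rep '' S)}

/-- The `X`-rank of a point `q`: minimal cardinality of a finite subset of `X`
whose linear span contains `q`. -/
def xrank {ι : Type} (X : Set (PJ k ι)) (q : PJ k ι) : ℕ :=
  sInf {n | ∃ S : Finset (PJ k ι), ↑S ⊆ X ∧ S.card = n ∧ q ∈ pspan (↑S : Set (PJ k ι))}

/-- `𝒮(X,q)`: the set of rank-evincing subsets of `X` for `q`. -/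
def rankSets {ι : Type} (X : Set (PJ k ι)) (q : PJ k ι) : Set (Finset (PJ k ι)) :=
  {S | ↑S ⊆ X ∧ S.card = xrank X q ∧ q ∈ pspan (↑S : Set (PJ k ι))}

/-- `W_q := ⋂_{S ∈ 𝒮(X,q)} ⟨S⟩`, the non-uniqueness set of `q`. -/
def Wset {ι : Type} (X : Set (PJ k ι)) (q : PJ k ι) : Set (PJ k ι) :=
  ⋂ S ∈ rankSets X q, pspan (↑S : Set (PJ k ι))

/-- `S` irredundantly spans `q`. -/
def IrrSpans {ι : Type} (q : PJ k ι) (S : Finset (PJ k ι)) : Prop :=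
  q ∈ pspan (↑S : Set (PJ k ι)) ∧ ∀ S' : Finset (PJ k ι), S' ⊂ S → q ∉ pspan (↑S' : Set (PJ k ι))

/-- `𝒮(X,q,t)`: cardinality-`t` subsets of `X` irredundantly spanning `q`. -/
def irrSets {ι : Type} (X : Set (PJ k ι)) (q : PJ k ι) (t : ℕ) : Set (Finset (PJ k ι)) :=
  {S | ↑S ⊆ X ∧ S.card = t ∧ IrrSpans q S}

/-- `W_{q,t} := ⋂_{S ∈ 𝒮(X,q,t)} ⟨S⟩` (equal to the whole space when `𝒮(X,q,t) = ∅`). -/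
def WsetT {ι : Type} (X : Set (PJ k ι)) (q : PJ k ι) (t : ℕ) : Set (PJ k ι) :=
  ⋂ S ∈ irrSets X q t, pspan (↑S : Set (PJ k ι))

/-- Common zero locus in projective space of a set of (homogeneous) polynomials. -/
def zLocus {ι : Type} (T : Set (MvPolynomial ι k)) : Set (PJ k ι) :=
  {p | ∀ f ∈ T, MvPolynomial.eval p.rep f = 0}

/-- Zariski-closed subsets of projective space. -/
def ZClosed {ι : Type} (C : Set (PJ k ι)) : Prop :=
  ∃ T : Set (MvPolynomial ι k), (∀ f ∈ T, ∃ n, f.IsHomogeneous n) ∧ C = zLocus T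

/-- Zariski-open subsets of projective space. -/
def ZOpen {ι : Type} (U : Set (PJ k ι)) : Prop := ZClosed Uᶜ

/-- Irreducibility of a set for the Zariski topology. -/
def ZIrred {ι : Type} (C : Set (PJ k ι)) : Prop :=
  C.Nonempty ∧ ∀ C₁ C₂ : Set (PJ k ι), ZClosed C₁ → ZClosed C₂ → C ⊆ C₁ ∪ C₂ →
    C ⊆ C₁ ∨ C ⊆ C₂

/-- An integral (i.e. reduced and irreducible, here: irreducible closed) subvariety. -/
def IsVariety {ι : Type} (X : Set (PJ k ι)) : Prop := ZClosed X ∧ ZIrred X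

/-- Non-degenerate: not contained in any hyperplane. -/
def Nondeg {ι : Type} (X : Set (PJ k ι)) : Prop := pspan X = Set.univ

/-- Zariski closure. -/
def zClosure {ι : Type} (S : Set (PJ k ι)) : Set (PJ k ι) :=
  ⋂₀ {C | ZClosed C ∧ S ⊆ C}

/-- The `b`-th secant variety of `X`. -/
def secantVar {ι : Type} (X : Set (PJ k ι)) (b : ℕ) : Set (PJ k ι) :=
  zClosure (⋃ S ∈ {S : Finset (PJ k ι) | ↑S ⊆ X ∧ S.card = b}, pspan (↑S : Set (PJ k ι)))

/-- The border `X`-rank of `q`. -/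
def borderRank {ι : Type} (X : Set (PJ k ι)) (q : PJ k ι) : ℕ :=
  sInf {b | 0 < b ∧ q ∈ secantVar X b}

/-- Dimension of a set: sup of lengths of chains of irreducible closed subsets. -/
def varDim {ι : Type} (X : Set (PJ k ι)) : ℕ :=
  sSup {n | ∃ c : Fin (n + 1) → Set (PJ k ι), StrictMono c ∧
    (∀ i, ZClosed (c i) ∧ ZIrred (c i)) ∧ ∀ i, c i ⊆ X}

/-- The vector-space dimension of the linear span of a set of projective points
(the projective dimension is this number minus `1`). -/
def sdim {ι : Type} (T : Set (PJ k ι)) : ℕ :=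
  Module.finrank k (Submodule.span k (Projectivization.rep '' T))

/-- A projective linear subspace whose underlying linear subspace has dimension `m`. -/
def IsLinSub {ι : Type} (m : ℕ) (L : Set (PJ k ι)) : Prop :=
  ∃ W : Submodule k (ι → k), Module.finrank k W = m ∧ L = {p | p.rep ∈ W}

/-- A line in projective space. -/
def IsLine {ι : Type} (L : Set (PJ k ι)) : Prop := IsLinSub 2 L

/-- A hyperplane in `ℙ^r`. -/
def IsHyperplane {r : ℕ} (H : Set (PP k r)) : Prop := IsLinSub r H

/-- The standard vector of monomials defining the rational normal curve. -/
def rncVec (d : ℕ) (a b : k) : Fin (d + 1) → k := fun i => a ^ (d - (i : ℕ)) * b ^ (i : ℕ)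

/-- The degree-`d` rational normal curve in `ℙ^d` (image of the `d`-th Veronese of `ℙ^1`). -/
def rnc (d : ℕ) : Set (PP k d) :=
  {p | ∃ a b c : k, ¬(a = 0 ∧ b = 0) ∧ c ≠ 0 ∧ p.rep = c • rncVec d a b}

/-- The linear span of the degree-`b` zero-dimensional subscheme of the degree-`d`
rational normal curve corresponding to a nonzero binary form with coefficients `g`
(points of the span are exactly the sequences satisfying the associated linear recurrence). -/
def schemeSpan (d b : ℕ) (g : Fin (b + 1) → k) : Set (PP k d) :=
  {p | ∀ i : ℕ, ∀ _h : i + b ≤ d,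
    ∑ j : Fin (b + 1), g j * p.rep ⟨i + (j : ℕ), by have := j.isLt; omega⟩ = 0}

/-- The cactus rank of a point of `ℙ^d` with respect to the rational normal curve:
minimal degree of a zero-dimensional subscheme of the curve whose span contains `q`. -/
def cactusRank (d : ℕ) (q : PP k d) : ℕ :=
  sInf {b | ∃ g : Fin (b + 1) → k, g ≠ 0 ∧ q ∈ schemeSpan d b g}

/-- A property `P` holds for a general `m`-tuple of points of projective space:
it holds away from the zero locus of some nonzero multihomogeneous polynomial. -/
def GenlHolds {ι : Type} (m : ℕ) (P : (Fin m → PJ k ι) → Prop) : Prop :=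
  ∃ F : MvPolynomial (Fin m × ι) k, F ≠ 0 ∧
    ∀ u : Fin m → PJ k ι,
      MvPolynomial.eval (fun x => (u x.1).rep x.2) F ≠ 0 → P u

/-- A property `P` holds for a general `m`-tuple of points of `X`. -/
def GenlHoldsOn {ι : Type} (X : Set (PJ k ι)) (m : ℕ) (P : (Fin m → PJ k ι) → Prop) : Prop :=
  ∃ F : MvPolynomial (Fin m × ι) k,
    (∃ u : Fin m → PJ k ι, (∀ i, u i ∈ X) ∧
      MvPolynomial.eval (fun x => (u x.1).rep x.2) F ≠ 0) ∧
    ∀ u : Fin m → PJ k ι, (∀ i, u i ∈ X) →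
      MvPolynomial.eval (fun x => (u x.1).rep x.2) F ≠ 0 → P u

/-- Degree-`t` forms vanishing on a set of projective points. -/
def vanishSub {ι : Type} (T : Set (PJ k ι)) : Submodule k (MvPolynomial ι k) :=
  ⨅ p ∈ T, LinearMap.ker (MvPolynomial.aeval (R := k) (Projectivization.rep p)).toLinearMap

/-- `h⁰(𝓘_T(t))`: dimension of the space of degree-`t` forms vanishing on `T`. -/
def h0 {ι : Type} (t : ℕ) (T : Set (PJ k ι)) : ℕ :=
  Module.finrank k ↥(MvPolynomial.homogeneousSubmodule ι k t ⊓ vanishSub T)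

/-- `h¹(𝓘_S(d))` for a finite set of points `S`: the failure of `S` to impose
independent conditions on degree-`d` forms. -/
def h1I {ι : Type} (S : Finset (PJ k ι)) (d : ℕ) : ℕ :=
  S.card - (Module.finrank k ↥(MvPolynomial.homogeneousSubmodule ι k d) - h0 d (↑S : Set (PJ k ι)))

/-- Index type for the coordinates of the degree-`d` Veronese embedding of `ℙ^n`:
exponent vectors of total degree `d` (there are `(n+d choose n)` of them). -/
def ExpIdx (n d : ℕ) : Type := {m : Fin (n + 1) → ℕ // ∑ i, m i = d}

/-- The vector of all degree-`d` monomials evaluated at `u`. -/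
def verVec (n d : ℕ) (u : Fin (n + 1) → k) : ExpIdx n d → k := fun m => ∏ i, u i ^ m.1 i

lemma verVec_ne_zero {n d : ℕ} {u : Fin (n + 1) → k} (hu : u ≠ 0) :
    verVec (k := k) n d u ≠ 0 := by
  obtain ⟨i, hi⟩ := Function.ne_iff.mp hu
  intro h
  have hm : (∑ j, if j = i then d else 0) = d := by simp
  have h0 : verVec n d u ⟨fun j => if j = i then d else 0, hm⟩ = 0 := by rw [h]; rfl
  have h1 : verVec n d u ⟨fun j => if j = i then d else 0, hm⟩ = u i ^ d := by
    simp only [verVec]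
    rw [Finset.prod_eq_single i (fun b _ hb => by simp [hb]) (by simp)]
    simp
  rw [h1] at h0
  rcases eq_or_ne d 0 with hd | hd
  · rw [hd] at h0; simp at h0
  · exact hi ((pow_eq_zero_iff hd).mp h0)

/-- The degree-`d` Veronese embedding `ν_d : ℙ^n → ℙ^r`, `r = (n+d choose n) - 1`. -/
def nud (n d : ℕ) (p : PP k n) : PJ k (ExpIdx n d) :=
  Projectivization.mk k (verVec n d p.rep) (verVec_ne_zero p.rep_nonzero)




-- rep injective
lemma rep_inj {ι : Type} : Function.Injective (Projectivization.rep : PJ k ι → ι → k) := by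
  intro p q h
  have h2 : Projectivization.mk k p.rep p.rep_nonzero = Projectivization.mk k q.rep q.rep_nonzero :=
    (Projectivization.mk_eq_mk_iff k _ _ _ _).mpr ⟨1, by rw [h, one_smul]⟩
  rwa [Projectivization.mk_rep, Projectivization.mk_rep] at h2

-- span of rep image of a projective-closed ... : nondeg gives top
lemma span_rep_top {r : ℕ} {X : Set (PP k r)}
    (h : ∀ p : PP k r, p.rep ∈ Submodule.span k (Projectivization.rep '' X)) :
    Submodule.span k (Projectivization.rep '' X) = ⊤ := by
  rw [eq_top_iff]
  rintro v -
  rcases eq_or_ne v 0 with rfl | hv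
  · exact Submodule.zero_mem _
  · have h1 := h (Projectivization.mk k v hv)
    have h2 : Projectivization.mk k ((Projectivization.mk k v hv).rep)
        (Projectivization.rep_nonzero _) = Projectivization.mk k v hv :=
      Projectivization.mk_rep _
    rw [Projectivization.mk_eq_mk_iff] at h2
    obtain ⟨a, ha⟩ := h2
    have hv2 : v = (a⁻¹ : kˣ) • (Projectivization.mk k v hv).rep := by
      rw [← ha, smul_smul]; simp
    rw [hv2]
    exact Submodule.smul_mem _ _ h1

-- linear polynomial of a dual functional
def linPoly {r : ℕ} (φ : Module.Dual k (Fin (r+1) → k)) : MvPolynomial (Fin (r+1)) k :=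
  ∑ j, MvPolynomial.C (φ (Pi.single j 1)) * MvPolynomial.X j

lemma linPoly_homog {r : ℕ} (φ : Module.Dual k (Fin (r+1) → k)) :
    (linPoly φ).IsHomogeneous 1 := by
  apply MvPolynomial.IsHomogeneous.sum
  intro j _
  have := (MvPolynomial.isHomogeneous_C (Fin (r+1)) (φ (Pi.single j 1))).mul
    (MvPolynomial.isHomogeneous_X k j)
  simpa using this

lemma linPoly_eval {r : ℕ} (φ : Module.Dual k (Fin (r+1) → k)) (v : Fin (r+1) → k) :
    MvPolynomial.eval v (linPoly φ) = φ v := by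
  have hv : v = ∑ j, v j • (Pi.single j 1 : Fin (r+1) → k) := by
    ext i; simp [Pi.single_apply]
  rw [linPoly]
  conv_rhs => rw [hv]
  rw [map_sum, map_sum]
  apply Finset.sum_congr rfl
  intro j _
  simp [mul_comm]

-- the projective set of a subspace is closed
lemma zclosed_subspace {r : ℕ} (W : Submodule k (Fin (r+1) → k)) :
    ZClosed {p : PP k r | p.rep ∈ W} := by
  refine ⟨{f | ∃ φ : Module.Dual k (Fin (r+1) → k), W ≤ LinearMap.ker φ ∧ f = linPoly φ}, ?_, ?_⟩
  · rintro f ⟨φ, -, rfl⟩; exact ⟨1, linPoly_homog φ⟩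
  · ext p
    simp only [Set.mem_setOf_eq, zLocus]
    constructor
    · rintro hp f ⟨φ, hφ, rfl⟩
      rw [linPoly_eval]
      exact hφ hp
    · intro hp
      by_contra hmem
      obtain ⟨φ, hφ1, hφ2⟩ := W.exists_dual_map_eq_bot_of_notMem hmem inferInstance
      refine hφ1 ?_
      have := hp (linPoly φ) ⟨φ, ?_, rfl⟩
      · rwa [linPoly_eval] at this
      · intro w hw
        rw [LinearMap.mem_ker]
        have : φ w ∈ W.map φ := ⟨w, hw, rfl⟩
        rw [hφ2] at this
        simpa using this

lemma zclosed_union {ι : Type} {C D : Set (PJ k ι)} (hC : ZClosed C) (hD : ZClosed D) :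
    ZClosed (C ∪ D) := by
  obtain ⟨T1, h1, rfl⟩ := hC
  obtain ⟨T2, h2, rfl⟩ := hD
  refine ⟨{h | ∃ f ∈ T1, ∃ g ∈ T2, h = f * g}, ?_, ?_⟩
  · rintro h ⟨f, hf, g, hg, rfl⟩
    obtain ⟨n, hn⟩ := h1 f hf
    obtain ⟨m, hm⟩ := h2 g hg
    exact ⟨n + m, hn.mul hm⟩
  · ext p
    simp only [Set.mem_union, zLocus, Set.mem_setOf_eq]
    constructor
    · rintro (hp | hp) h ⟨f, hf, g, hg, rfl⟩ <;> rw [map_mul]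
      · rw [hp f hf, zero_mul]
      · rw [hp g hg, mul_zero]
    · intro hp
      by_cases h1' : ∀ f ∈ T1, MvPolynomial.eval p.rep f = 0
      · exact Or.inl h1'
      · right
        push_neg at h1'
        obtain ⟨f, hf, hfne⟩ := h1'
        intro g hg
        have := hp (f * g) ⟨f, hf, g, hg, rfl⟩
        rw [map_mul] at this
        exact (mul_eq_zero.mp this).resolve_left hfne

lemma zclosed_empty {ι : Type} : ZClosed (∅ : Set (PJ k ι)) := by
  refine ⟨{1}, ?_, ?_⟩
  · rintro f rfl; exact ⟨0, MvPolynomial.isHomogeneous_one ι k⟩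
  · ext p
    simp [zLocus]


lemma zclosed_iUnion_fin {ι : Type} : ∀ (n : ℕ) (C : Fin n → Set (PJ k ι)),
    (∀ i, ZClosed (C i)) → ZClosed (⋃ i, C i)
  | 0, C, _ => by
      convert zclosed_empty (k := k) (ι := ι)
      simp
  | n + 1, C, hC => by
      have : (⋃ i, C i) = C 0 ∪ ⋃ i : Fin n, C i.succ := by
        ext p
        constructor
        · rintro ⟨s, ⟨i, rfl⟩, hp⟩
          rcases Fin.eq_zero_or_eq_succ i with rfl | ⟨j, rfl⟩
          · exact Or.inl hp
          · exact Or.inr ⟨_, ⟨j, rfl⟩, hp⟩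
        · rintro (hp | ⟨s, ⟨i, rfl⟩, hp⟩)
          · exact ⟨C 0, ⟨0, rfl⟩, hp⟩
          · exact ⟨_, ⟨i.succ, rfl⟩, hp⟩
      rw [this]
      exact zclosed_union (hC 0) (zclosed_iUnion_fin n _ (fun i => hC i.succ))

lemma zirred_subset_iUnion {ι : Type} {X : Set (PJ k ι)} (hX : ZIrred X) :
    ∀ (n : ℕ) (C : Fin n → Set (PJ k ι)), (∀ i, ZClosed (C i)) → X ⊆ ⋃ i, C i →
    ∃ i, X ⊆ C i
  | 0, C, _, hsub => by
      obtain ⟨x, hx⟩ := hX.1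
      have := hsub hx
      simp at this
  | n + 1, C, hC, hsub => by
      have hrw : (⋃ i, C i) = C 0 ∪ ⋃ i : Fin n, C i.succ := by
        ext p
        constructor
        · rintro ⟨s, ⟨i, rfl⟩, hp⟩
          rcases Fin.eq_zero_or_eq_succ i with rfl | ⟨j, rfl⟩
          · exact Or.inl hp
          · exact Or.inr ⟨_, ⟨j, rfl⟩, hp⟩
        · rintro (hp | ⟨s, ⟨i, rfl⟩, hp⟩)
          · exact ⟨C 0, ⟨0, rfl⟩, hp⟩
          · exact ⟨_, ⟨i.succ, rfl⟩, hp⟩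
      rw [hrw] at hsub
      rcases hX.2 _ _ (hC 0) (zclosed_iUnion_fin n _ (fun i => hC i.succ)) hsub with h | h
      · exact ⟨0, h⟩
      · obtain ⟨i, hi⟩ := zirred_subset_iUnion hX n _ (fun i => hC i.succ) h
        exact ⟨i.succ, hi⟩

lemma exists_avoid {r n : ℕ} {X : Set (PP k r)} (hXv : IsVariety X) (hXn : Nondeg X)
    (W : Fin n → Submodule k (Fin (r+1) → k)) (hW : ∀ i, W i ≠ ⊤) :
    ∃ x ∈ X, ∀ i, x.rep ∉ W i := by
  by_contra h
  push_neg at h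
  have hsub : X ⊆ ⋃ i, {p : PP k r | p.rep ∈ W i} := by
    intro x hx
    obtain ⟨i, hi⟩ := h x hx
    exact ⟨_, ⟨i, rfl⟩, hi⟩
  obtain ⟨i, hi⟩ := zirred_subset_iUnion hXv.2 n _ (fun i => zclosed_subspace (W i)) hsub
  have h1 : Submodule.span k (Projectivization.rep '' X) ≤ W i := by
    rw [Submodule.span_le]
    rintro _ ⟨p, hp, rfl⟩
    exact hi hp
  have h2 : Submodule.span k (Projectivization.rep '' X) = ⊤ := by
    apply span_rep_top
    intro p
    have : p ∈ pspan X := by rw [hXn]; trivial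
    exact this
  exact hW i (top_unique (h2 ▸ h1))

lemma span_ne_top_of_card {r : ℕ} {s : Set (Fin (r+1) → k)} (S : Finset (Fin (r+1) → k))
    (hsub : s ⊆ ↑S) (hcard : S.card ≤ r) : Submodule.span k s ≠ ⊤ := by
  intro htop
  have h1 : Submodule.span k (↑S : Set (Fin (r+1) → k)) = ⊤ :=
    top_unique (htop ▸ Submodule.span_mono hsub)
  have h2 := finrank_span_finset_le_card (R := k) S
  rw [Set.finrank, h1, finrank_top, Module.finrank_fin_fun] at h2
  omega

lemma exists_indep_avoid {r : ℕ} {X : Set (PP k r)} (hXv : IsVariety X) (hXn : Nondeg X)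
    (q : PP k r) :
    ∀ j, j ≤ r → ∃ u : Fin j → PP k r, (∀ i, u i ∈ X) ∧
      LinearIndependent k (fun i => (u i).rep) ∧
      q.rep ∉ Submodule.span k (Set.range fun i => (u i).rep)
  | 0, _ => by
      refine ⟨Fin.elim0, fun i => i.elim0, linearIndependent_empty_type, ?_⟩
      rw [Set.range_eq_empty, Submodule.span_empty, Submodule.mem_bot]
      exact q.rep_nonzero
  | j + 1, hj => by
      classical
      obtain ⟨u, huX, hind, hq⟩ := exists_indep_avoid hXv hXn q j (by omega)
      set w : Fin j → (Fin (r+1) → k) := fun i => (u i).rep with hw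
      have hWne : Submodule.span k (insert q.rep (Set.range w)) ≠ ⊤ := by
        apply span_ne_top_of_card (insert q.rep (Finset.image w Finset.univ))
        · intro x hx
          rcases hx with rfl | ⟨i, rfl⟩ <;> simp
        · calc (insert q.rep (Finset.image w Finset.univ)).card
              ≤ (Finset.image w Finset.univ).card + 1 := Finset.card_insert_le _ _
            _ ≤ j + 1 := by
                have := Finset.card_image_le (f := w) (s := Finset.univ)
                simp only [Finset.card_univ, Fintype.card_fin] at this
                omega
            _ ≤ r := hj
      obtain ⟨x, hxX, hx⟩ := exists_avoid hXv hXn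
        (fun _ : Fin 1 => Submodule.span k (insert q.rep (Set.range w))) (fun _ => hWne)
      have hx0 := hx 0
      refine ⟨Fin.cons x u, ?_, ?_, ?_⟩
      · intro i
        refine Fin.cases hxX (fun i' => huX i') i
      · have hrw : (fun i => ((Fin.cons x u : Fin (j+1) → PP k r) i).rep)
            = Fin.cons x.rep w := by
          funext i
          refine Fin.cases ?_ (fun i' => ?_) i <;> simp [hw]
        rw [hrw, linearIndependent_fin_cons]
        refine ⟨hind, ?_⟩
        intro hmem
        exact hx0 (Submodule.span_mono (Set.subset_insert _ _) hmem)
      · have hrw : (Set.range fun i => ((Fin.cons x u : Fin (j+1) → PP k r) i).rep)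
            = insert x.rep (Set.range w) := by
          ext y
          constructor
          · rintro ⟨i, rfl⟩
            refine Fin.cases ?_ (fun i' => ?_) i
            · simp
            · exact Or.inr ⟨i', by simp [hw]⟩
          · rintro (rfl | ⟨i', rfl⟩)
            · exact ⟨0, by simp⟩
            · exact ⟨i'.succ, by simp [hw]⟩
        rw [hrw]
        intro hmem
        rw [Submodule.mem_span_insert] at hmem
        obtain ⟨a, z, hz, hqz⟩ := hmem
        rcases eq_or_ne a 0 with rfl | ha
        · rw [zero_smul, zero_add] at hqz
          exact hq (hqz ▸ hz)
        · apply hx0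
          have hxrep : x.rep = a⁻¹ • (q.rep - z) := by
            rw [hqz]; simp [smul_smul, ha, smul_sub]
          rw [hxrep]
          refine Submodule.smul_mem _ _ (Submodule.sub_mem _ ?_ ?_)
          · exact Submodule.subset_span (Set.mem_insert _ _)
          · exact Submodule.span_mono (Set.subset_insert _ _) hz

lemma exists_witness {r : ℕ} {X : Set (PP k r)} (hXv : IsVariety X) (hXn : Nondeg X)
    (q : PP k r) :
    ∃ u : Fin (r+1) → PP k r, (∀ i, u i ∈ X) ∧
      LinearIndependent k (fun i => (u i).rep) ∧
      ∀ i, q.rep ∉ Submodule.span k ((fun j => (u j).rep) '' {i}ᶜ) := by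
  classical
  obtain ⟨u, huX, hind, hq⟩ := exists_indep_avoid hXv hXn q r le_rfl
  set w : Fin r → (Fin (r+1) → k) := fun i => (u i).rep with hw
  -- the subspaces to avoid
  set V : Fin (r+1) → Submodule k (Fin (r+1) → k) :=
    Fin.cons (Submodule.span k (Set.range w))
      (fun i => Submodule.span k (insert q.rep (w '' {i}ᶜ))) with hV
  have hVne : ∀ i, V i ≠ ⊤ := by
    intro i
    refine Fin.cases ?_ (fun i' => ?_) i
    · rw [hV, Fin.cons_zero]
      apply span_ne_top_of_card (Finset.image w Finset.univ)
      · rintro x ⟨i', rfl⟩; simp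
      · have := Finset.card_image_le (f := w) (s := Finset.univ)
        simp only [Finset.card_univ, Fintype.card_fin] at this
        omega
    · rw [hV, Fin.cons_succ]
      apply span_ne_top_of_card (insert q.rep (Finset.image w (Finset.univ.erase i')))
      · rintro x (rfl | ⟨j, hj, rfl⟩)
        · simp
        · have hji : j ≠ i' := hj
          simp only [Finset.coe_insert, Set.mem_insert_iff, Finset.coe_image]
          exact Or.inr ⟨j, by simp [hji], rfl⟩
      · have h1 : (Finset.univ.erase i').card = r - 1 := by
          rw [Finset.card_erase_of_mem (Finset.mem_univ _)]
          simp
        have h2 := Finset.card_image_le (f := w) (s := Finset.univ.erase i')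
        have h3 := Finset.card_insert_le q.rep (Finset.image w (Finset.univ.erase i'))
        have hr : 0 < r := i'.pos
        omega
  obtain ⟨x, hxX, hx⟩ := exists_avoid hXv hXn V hVne
  have hx0 : x.rep ∉ Submodule.span k (Set.range w) := by
    have := hx 0
    rwa [hV, Fin.cons_zero] at this
  have hxs : ∀ i : Fin r, x.rep ∉ Submodule.span k (insert q.rep (w '' {i}ᶜ)) := by
    intro i
    have := hx i.succ
    rwa [hV, Fin.cons_succ] at this
  refine ⟨Fin.cons x u, fun i => Fin.cases hxX (fun i' => huX i') i, ?_, ?_⟩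
  · have hrw : (fun i => ((Fin.cons x u : Fin (r+1) → PP k r) i).rep)
        = Fin.cons x.rep w := by
      funext i
      refine Fin.cases ?_ (fun i' => ?_) i <;> simp [hw]
    rw [hrw, linearIndependent_fin_cons]
    exact ⟨hind, hx0⟩
  · intro i
    refine Fin.cases ?_ (fun i' => ?_) i
    · have hrw : (fun j => ((Fin.cons x u : Fin (r+1) → PP k r) j).rep) '' {(0 : Fin (r+1))}ᶜ
          = Set.range w := by
        ext y
        constructor
        · rintro ⟨j, hj, rfl⟩
          rcases Fin.eq_zero_or_eq_succ j with rfl | ⟨j', rfl⟩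
          · exact absurd rfl hj
          · exact ⟨j', by simp [hw]⟩
        · rintro ⟨j', rfl⟩
          refine ⟨j'.succ, ?_, by simp [hw]⟩
          simp [Fin.succ_ne_zero]
      rw [hrw]
      exact hq
    · have hrw : (fun j => ((Fin.cons x u : Fin (r+1) → PP k r) j).rep) '' {i'.succ}ᶜ
          = insert x.rep (w '' {i'}ᶜ) := by
        ext y
        constructor
        · rintro ⟨j, hj, rfl⟩
          rcases Fin.eq_zero_or_eq_succ j with rfl | ⟨j', rfl⟩
          · exact Or.inl (by simp)
          · refine Or.inr ⟨j', ?_, by simp [hw]⟩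
            intro hji
            have hje : j' = i' := hji
            exact hj (by simp [hje])
        · rintro (rfl | ⟨j', hj', rfl⟩)
          · refine ⟨0, ?_, by simp⟩
            simp [(Fin.succ_ne_zero i').symm]
          · refine ⟨j'.succ, ?_, by simp [hw]⟩
            intro hj
            rw [Set.mem_singleton_iff, Fin.succ_inj] at hj
            exact hj' hj
      rw [hrw]
      intro hmem
      rw [Submodule.mem_span_insert] at hmem
      obtain ⟨a, z, hz, hqz⟩ := hmem
      have hsub : w '' {i'}ᶜ ⊆ Set.range w := Set.image_subset_range _ _
      rcases eq_or_ne a 0 with rfl | ha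
      · rw [zero_smul, zero_add] at hqz
        exact hq (Submodule.span_mono hsub (hqz ▸ hz))
      · apply hxs i'
        have hxrep : x.rep = a⁻¹ • (q.rep - z) := by
          rw [hqz]; simp [smul_smul, ha, smul_sub]
        rw [hxrep]
        refine Submodule.smul_mem _ _ (Submodule.sub_mem _ ?_ ?_)
        · exact Submodule.subset_span (Set.mem_insert _ _)
        · exact Submodule.span_mono (Set.subset_insert _ _) hz

lemma update_image_compl {r : ℕ} (w : Fin (r+1) → (Fin (r+1) → k)) (v : Fin (r+1) → k)
    (i : Fin (r+1)) : (Function.update w i v) '' {i}ᶜ = w '' {i}ᶜ := by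
  apply Set.image_congr
  intro j hj
  exact Function.update_of_ne hj v w

lemma indep_update_iff {r : ℕ} {w : Fin (r+1) → (Fin (r+1) → k)}
    (hw : LinearIndependent k w) (v : Fin (r+1) → k) (i : Fin (r+1)) :
    LinearIndependent k (Function.update w i v) ↔ v ∉ Submodule.span k (w '' {i}ᶜ) := by
  constructor
  · intro h
    have h2 := h.notMem_span_image (s := {i}ᶜ) (x := i) (by simp)
    rwa [Function.update_self, update_image_compl] at h2
  · intro hv
    have hset : LinearIndependent k (fun x : (w '' {i}ᶜ) => (x : Fin (r+1) → k)) :=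
      LinearIndepOn.id_image (hw.comp _ Subtype.val_injective)
    have hins : LinearIndependent k
        (fun x : (insert v (w '' {i}ᶜ) : Set (Fin (r+1) → k)) => (x : Fin (r+1) → k)) :=
      LinearIndepOn.id_insert hset hv
    have hrange : Set.range (Function.update w i v) = insert v (w '' {i}ᶜ) := by
      ext y
      constructor
      · rintro ⟨j, rfl⟩
        rcases eq_or_ne j i with rfl | hj
        · simp
        · exact Or.inr ⟨j, hj, (Function.update_of_ne hj v w).symm⟩
      · rintro (rfl | ⟨j, hj, rfl⟩)
        · exact ⟨i, Function.update_self _ _ _⟩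
        · exact ⟨j, Function.update_of_ne hj v w⟩
    have hinj : Function.Injective (Function.update w i v) := by
      intro a b hab
      by_cases ha : a = i <;> by_cases hb : b = i
      · rw [ha, hb]
      · rw [ha] at hab
        rw [Function.update_self, Function.update_of_ne hb] at hab
        have hmem : v ∈ w '' ({i}ᶜ : Set (Fin (r+1))) := ⟨b, hb, hab.symm⟩
        exact absurd (Submodule.subset_span hmem) hv
      · rw [hb] at hab
        rw [Function.update_of_ne ha, Function.update_self] at hab
        have hmem : v ∈ w '' ({i}ᶜ : Set (Fin (r+1))) := ⟨a, ha, hab⟩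
        exact absurd (Submodule.subset_span hmem) hv
      · rw [Function.update_of_ne ha, Function.update_of_ne hb] at hab
        exact hw.injective hab
    rw [← linearIndepOn_id_range_iff hinj]
    rw [hrange]
    exact hins

lemma det_rows_ne_zero_iff {r : ℕ} (M : Matrix (Fin (r+1)) (Fin (r+1)) k) :
    M.det ≠ 0 ↔ LinearIndependent k (fun i => M i) := by
  change M.det ≠ 0 ↔ LinearIndependent k M.row
  rw [Matrix.linearIndependent_rows_iff_isUnit, Matrix.isUnit_iff_isUnit_det,
    isUnit_iff_ne_zero]


lemma good_tuple_mem {r : ℕ} [DecidableEq (PP k r)] {X : Set (PP k r)} (q : PP k r)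
    {u : Fin (r+1) → PP k r} (huX : ∀ i, u i ∈ X)
    (hind : LinearIndependent k (fun i => (u i).rep))
    (havoid : ∀ i, q.rep ∉ Submodule.span k ((fun j => (u j).rep) '' {i}ᶜ)) :
    Function.Injective u ∧ Finset.univ.image u ∈ irrSets X q (r+1) := by
  have hinj : Function.Injective u := fun a b hab => hind.injective (by rw [hab])
  refine ⟨hinj, ?_, ?_, ?_, ?_⟩
  · -- subset of X
    intro p hp
    simp only [Finset.coe_image, Finset.coe_univ, Set.image_univ, Set.mem_range] at hp
    obtain ⟨i, rfl⟩ := hp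
    exact huX i
  · rw [Finset.card_image_of_injective _ hinj, Finset.card_univ, Fintype.card_fin]
  · -- q in span
    have hS : ((Finset.univ.image u : Finset (PP k r)) : Set (PP k r)) = Set.range u := by
      simp
    show q.rep ∈ Submodule.span k
      (Projectivization.rep '' ((Finset.univ.image u : Finset (PP k r)) : Set (PP k r)))
    have htop : Submodule.span k (Set.range fun i => (u i).rep) = ⊤ :=
      hind.span_eq_top_of_card_eq_finrank (by simp [Module.finrank_fin_fun])
    have hrw : Projectivization.rep '' ((Finset.univ.image u : Finset (PP k r)) : Set (PP k r))
        = Set.range (fun i => (u i).rep) := by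
      rw [hS, ← Set.range_comp]
      rfl
    rw [hrw, htop]
    trivial
  · -- minimality
    intro S' hS'
    obtain ⟨a, haS, haS'⟩ := Finset.exists_of_ssubset hS'
    obtain ⟨i, -, rfl⟩ := Finset.mem_image.mp haS
    intro hqmem
    apply havoid i
    have hsub : (S' : Set (PP k r)) ⊆ u '' {i}ᶜ := by
      intro p hp
      have hpS : p ∈ Finset.univ.image u := hS'.1 hp
      obtain ⟨j, -, rfl⟩ := Finset.mem_image.mp hpS
      refine ⟨j, ?_, rfl⟩
      intro hji
      have : j = i := hji
      exact haS' (this ▸ hp)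
    have hsub2 : Projectivization.rep '' (S' : Set (PP k r))
        ⊆ (fun j => (u j).rep) '' {i}ᶜ := by
      rintro _ ⟨p, hp, rfl⟩
      obtain ⟨j, hj, rfl⟩ := hsub hp
      exact ⟨j, hj, rfl⟩
    exact Submodule.span_mono hsub2 hqmem

lemma irrSets_empty {r : ℕ} (X : Set (PP k r)) (q : PP k r) (t : ℕ) (ht : r + 2 ≤ t) :
    irrSets X q t = ∅ := by
  classical
  rw [Set.eq_empty_iff_forall_notMem]
  rintro S ⟨hSX, hcard, hq, hmin⟩
  set v : ↥S → (Fin (r+1) → k) := fun p => (p : PP k r).rep with hv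
  have hni : ¬ LinearIndependent k v := by
    intro h
    have := h.fintype_card_le_finrank
    rw [Fintype.card_coe, Module.finrank_fin_fun] at this
    omega
  rw [Fintype.not_linearIndependent_iff] at hni
  obtain ⟨g, hsum, i0, hg0⟩ := hni
  set p0 : PP k r := (i0 : PP k r) with hp0
  have hp0S : p0 ∈ S := i0.2
  have hrep : p0.rep ∈ Submodule.span k (Projectivization.rep '' (↑(S.erase p0) : Set (PP k r))) := by
    have h1 : ∑ x ∈ Finset.univ.erase i0, g x • v x + g i0 • v i0 = 0 := by
      rw [Finset.sum_erase_add _ _ (Finset.mem_univ i0)]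
      exact hsum
    have h2 : g i0 • v i0 = -(∑ x ∈ Finset.univ.erase i0, g x • v x) :=
      eq_neg_of_add_eq_zero_right h1
    have h4 : v i0 = (g i0)⁻¹ • (g i0 • v i0) := by
      rw [smul_smul, inv_mul_cancel₀ hg0, one_smul]
    have h3 : (∑ x ∈ Finset.univ.erase i0, g x • v x)
        ∈ Submodule.span k (Projectivization.rep '' (↑(S.erase p0) : Set (PP k r))) := by
      apply Submodule.sum_mem
      intro x hx
      apply Submodule.smul_mem
      apply Submodule.subset_span
      refine ⟨(x : PP k r), ?_, rfl⟩
      rw [Finset.coe_erase]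
      refine ⟨x.2, ?_⟩
      intro hxp
      have : x = i0 := Subtype.ext hxp
      exact (Finset.mem_erase.mp hx).1 this
    have : v i0 ∈ Submodule.span k (Projectivization.rep '' (↑(S.erase p0) : Set (PP k r))) := by
      rw [h4, h2]
      exact Submodule.smul_mem _ _ (Submodule.neg_mem _ h3)
    exact this
  have hqe : q ∈ pspan (↑(S.erase p0) : Set (PP k r)) := by
    have hle : Submodule.span k (Projectivization.rep '' (↑S : Set (PP k r)))
        ≤ Submodule.span k (Projectivization.rep '' (↑(S.erase p0) : Set (PP k r))) := by
      rw [Submodule.span_le]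
      rintro _ ⟨p, hp, rfl⟩
      by_cases hpp : p = p0
      · subst hpp; exact hrep
      · apply Submodule.subset_span
        exact ⟨p, by rw [Finset.coe_erase]; exact ⟨hp, hpp⟩, rfl⟩
    exact hle hq
  exact hmin (S.erase p0) (Finset.erase_ssubset hp0S) hqe


/-- The determinantal polynomial detecting good tuples. -/
def detF (r : ℕ) (q : PP k r) : MvPolynomial (Fin (r+1) × Fin (r+1)) k :=
  (Matrix.of fun i j => (MvPolynomial.X (i,j) : MvPolynomial (Fin (r+1) × Fin (r+1)) k)).det
    * ∏ i : Fin (r+1), (Matrix.of fun i' j =>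
        if i' = i then MvPolynomial.C (q.rep j)
        else (MvPolynomial.X (i',j) : MvPolynomial (Fin (r+1) × Fin (r+1)) k)).det

lemma eval_detF {r : ℕ} (q : PP k r) (u : Fin (r+1) → PP k r) :
    MvPolynomial.eval (fun x : Fin (r+1) × Fin (r+1) => (u x.1).rep x.2) (detF r q)
    = (Matrix.of fun i j => (u i).rep j).det
      * ∏ i : Fin (r+1), (Matrix.of (Function.update (fun i' => (u i').rep) i q.rep)).det := by
  set v : Fin (r+1) × Fin (r+1) → k := fun x => (u x.1).rep x.2 with hv
  rw [detF, map_mul, map_prod]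
  congr 1
  · rw [RingHom.map_det]
    congr 1
    ext i j
    simp [Matrix.map_apply, hv]
  · apply Finset.prod_congr rfl
    intro i _
    rw [RingHom.map_det]
    congr 1
    ext i' j
    by_cases h : i' = i
    · subst h
      simp [Matrix.map_apply, Function.update_self]
    · simp [Matrix.map_apply, h, Function.update_of_ne h, hv]

lemma detF_ne_zero_iff {r : ℕ} (q : PP k r) (u : Fin (r+1) → PP k r) :
    MvPolynomial.eval (fun x : Fin (r+1) × Fin (r+1) => (u x.1).rep x.2) (detF r q) ≠ 0
    ↔ LinearIndependent k (fun i => (u i).rep) ∧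
      ∀ i, q.rep ∉ Submodule.span k ((fun j => (u j).rep) '' {i}ᶜ) := by
  rw [eval_detF, mul_ne_zero_iff, Finset.prod_ne_zero_iff]
  constructor
  · rintro ⟨hA, hB⟩
    have hind : LinearIndependent k (fun i => (u i).rep) :=
      (det_rows_ne_zero_iff _).mp hA
    refine ⟨hind, fun i => ?_⟩
    have hBi := (det_rows_ne_zero_iff _).mp (hB i (Finset.mem_univ i))
    exact (indep_update_iff hind q.rep i).mp hBi
  · rintro ⟨hind, havoid⟩
    constructor
    · exact (det_rows_ne_zero_iff _).mpr hind
    · intro i _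
      exact (det_rows_ne_zero_iff _).mpr ((indep_update_iff hind q.rep i).mpr (havoid i))


/-- `𝒮(X,q,t) = ∅` for `t ≥ r + 2`, while `𝒮(X,q,r+1)` is nonempty and
contains a general subset of `X` of cardinality `r + 1`. -/
theorem statement10 {k : Type} [Field k] [IsAlgClosed k] {r : ℕ}
    [DecidableEq (PP k r)]
    (X : Set (PP k r)) (hXv : IsVariety X) (hXn : Nondeg X) (q : PP k r) :
    (∀ t : ℕ, r + 2 ≤ t → irrSets X q t = ∅) ∧
    (irrSets X q (r + 1)).Nonempty ∧
    GenlHoldsOn X (r + 1) (fun u =>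
      Function.Injective u ∧ Finset.univ.image u ∈ irrSets X q (r + 1)) := by
  obtain ⟨u₀, hu₀X, hu₀ind, hu₀avoid⟩ := exists_witness hXv hXn q
  refine ⟨fun t ht => irrSets_empty X q t ht, ?_, ?_⟩
  · exact ⟨Finset.univ.image u₀, (good_tuple_mem q hu₀X hu₀ind hu₀avoid).2⟩
  · refine ⟨detF r q, ⟨u₀, hu₀X, ?_⟩, ?_⟩
    · exact (detF_ne_zero_iff q u₀).mpr ⟨hu₀ind, hu₀avoid⟩
    · intro u huX hne
      obtain ⟨hind, havoid⟩ := (detF_ne_zero_iff q u).mp hne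
      exact good_tuple_mem q huX hind havoid


end
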